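/- Let σ be a Grassmannian permutation with unique descent at position k, written σ = a_1...a_k b_1...b_{n−k}. If in a reduced decomposition of σ the value a_i is at some step exchanged with the value b_j, then at some later step a_i is exchanged with b_{j'} for every j' < j. -/

import Mathlib

/-- The adjacent transposition `sᵢ = (i, i+1)` acting on `ℕ` (positions `1, …, n` are used). -/
def sgen (i : ℕ) : Equiv.Perm ℕ := Equiv.swap i (i + 1)

/-- The permutation represented by a word `w = w₁ w₂ … w_m`, namely `s_{w₁} s_{w₂} ⋯ s_{w_m}`. -/
def wordPerm (w : List ℕ) : Equiv.Perm ℕ := (w.map sgen).prod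

/-- A word is reduced if it has minimal length among all words representing the same
permutation. -/
def IsReducedWord (w : List ℕ) : Prop :=
  ∀ v : List ℕ, wordPerm v = wordPerm w → w.length ≤ v.length

/-- `w` is a reduced word of the permutation `σ`. -/
def IsReducedWordOf (σ : Equiv.Perm ℕ) (w : List ℕ) : Prop :=
  wordPerm w = σ ∧ IsReducedWord w
/-- The (values of the) pair of wires crossing at step `t` (0-indexed) of the wiring diagram
of the word `w`: the values in positions `w_t` and `w_t + 1` just before step `t`. -/
def crossing (w : List ℕ) (t : ℕ) : ℕ × ℕ :=
  (wordPerm (w.take t) (w.getD t 0), wordPerm (w.take t) (w.getD t 0 + 1))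

/-- Two ordered pairs represent the same unordered crossing. -/
def SameCross (p q : ℕ × ℕ) : Prop := p = q ∨ p = (q.2, q.1)

instance (p q : ℕ × ℕ) : Decidable (SameCross p q) := by
  unfold SameCross; infer_instance

lemma sgen_apply (i x : ℕ) : sgen i x = if x = i then i+1 else if x = i+1 then i else x := by
  simp [sgen, Equiv.swap_apply_def]

lemma sgen_sgen (i x : ℕ) : sgen i (sgen i x) = x := by
  simp [sgen]

lemma sgen_left (i : ℕ) : sgen i i = i + 1 := Equiv.swap_apply_left i (i+1)
lemma sgen_right (i : ℕ) : sgen i (i+1) = i := Equiv.swap_apply_right i (i+1)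

lemma sgen_mul_self (i : ℕ) : sgen i * sgen i = 1 := by
  simp [sgen]

lemma wordPerm_nil : wordPerm [] = 1 := rfl

lemma wordPerm_cons (a : ℕ) (w : List ℕ) : wordPerm (a :: w) = sgen a * wordPerm w := by
  simp [wordPerm]

lemma wordPerm_append_singleton (w : List ℕ) (a : ℕ) :
    wordPerm (w ++ [a]) = wordPerm w * sgen a := by
  simp [wordPerm]

lemma wordPerm_take_succ (w : List ℕ) (t : ℕ) (h : t < w.length) :
    wordPerm (w.take (t+1)) = wordPerm (w.take t) * sgen (w.getD t 0) := by
  rw [← wordPerm_append_singleton, List.take_succ]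
  congr 1
  rw [List.getElem?_eq_getElem h]
  simp [List.getD_eq_getElem?_getD, List.getElem?_eq_getElem h]


def invSet (π : Equiv.Perm ℕ) (B : ℕ) : Finset (ℕ × ℕ) :=
  (Finset.range (B+1) ×ˢ Finset.range (B+1)).filter fun p => p.1 < p.2 ∧ π p.2 < π p.1

lemma mem_invSet {π : Equiv.Perm ℕ} {B : ℕ} {p : ℕ × ℕ} :
    p ∈ invSet π B ↔ p.1 ≤ B ∧ p.2 ≤ B ∧ p.1 < p.2 ∧ π p.2 < π p.1 := by
  simp [invSet, Nat.lt_succ_iff, and_assoc]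

lemma invSet_one (B : ℕ) : invSet 1 B = ∅ := by
  ext p; simp [mem_invSet]; omega

lemma sgen_le {i B : ℕ} (hB : i + 1 ≤ B) {a : ℕ} (h : a ≤ B) : sgen i a ≤ B := by
  rw [sgen_apply]; split_ifs <;> omega

lemma sgen_lt_of {i a b : ℕ} (hab : a < b) (hne : ¬(a = i ∧ b = i + 1)) :
    sgen i a < sgen i b := by
  rw [sgen_apply, sgen_apply]; split_ifs <;> omega

lemma invSet_mul_ascent (π : Equiv.Perm ℕ) (i B : ℕ) (hB : i + 1 ≤ B)
    (h : π i < π (i+1)) :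
    invSet (π * sgen i) B
      = insert (i, i+1) ((invSet π B).image fun p => (sgen i p.1, sgen i p.2)) := by
  ext ⟨a, b⟩
  simp only [mem_invSet, Finset.mem_insert, Finset.mem_image, Equiv.Perm.mul_apply,
    Prod.mk.injEq, Prod.exists]
  constructor
  · rintro ⟨ha, hb, hab, hinv⟩
    by_cases hcase : a = i ∧ b = i + 1
    · exact Or.inl ⟨hcase.1, hcase.2⟩
    · refine Or.inr ⟨sgen i a, sgen i b, ⟨sgen_le hB ha, sgen_le hB hb,
        sgen_lt_of hab hcase, ?_⟩, sgen_sgen i a, sgen_sgen i b⟩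
      simpa [sgen_sgen] using hinv
  · rintro (⟨rfl, rfl⟩ | ⟨c, d, ⟨hc, hd, hcd, hinv⟩, rfl, rfl⟩)
    · refine ⟨by omega, hB, by omega, ?_⟩
      rw [sgen_left, sgen_right]
      exact h
    · have hne : ¬(c = i ∧ d = i + 1) := by
        rintro ⟨rfl, rfl⟩; exact absurd hinv (not_lt.2 h.le)
      exact ⟨sgen_le hB hc, sgen_le hB hd, sgen_lt_of hcd hne, by
        rwa [sgen_sgen, sgen_sgen]⟩

lemma card_invSet_mul_ascent (π : Equiv.Perm ℕ) (i B : ℕ) (hB : i + 1 ≤ B)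
    (h : π i < π (i+1)) :
    (invSet (π * sgen i) B).card = (invSet π B).card + 1 := by
  rw [invSet_mul_ascent π i B hB h]
  have hinj : Function.Injective fun p : ℕ × ℕ => (sgen i p.1, sgen i p.2) := by
    rintro ⟨a, b⟩ ⟨c, d⟩ h
    simp only [Prod.mk.injEq] at h ⊢
    exact ⟨(sgen i).injective h.1, (sgen i).injective h.2⟩
  rw [Finset.card_insert_of_notMem, Finset.card_image_of_injective _ hinj]
  intro hmem
  rw [Finset.mem_image] at hmem
  obtain ⟨⟨c, d⟩, hcd, heq⟩ := hmem
  simp only [Prod.mk.injEq] at heq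
  have hc : c = i + 1 := (sgen i).injective (by rw [heq.1, sgen_right])
  have hd : d = i := (sgen i).injective (by rw [heq.2, sgen_left])
  rw [mem_invSet] at hcd
  omega

lemma card_invSet_mul_descent (π : Equiv.Perm ℕ) (i B : ℕ) (hB : i + 1 ≤ B)
    (h : π (i+1) < π i) :
    (invSet π B).card = (invSet (π * sgen i) B).card + 1 := by
  have h' : (π * sgen i) i < (π * sgen i) (i+1) := by
    simp only [Equiv.Perm.mul_apply, sgen_left, sgen_right]
    exact h
  have := card_invSet_mul_ascent (π * sgen i) i B hB h'
  rwa [mul_assoc, sgen_mul_self, mul_one] at this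

def FixAbove (π : Equiv.Perm ℕ) (B : ℕ) : Prop := ∀ x, B < x → π x = x

lemma FixAbove.mapsTo {π : Equiv.Perm ℕ} {B : ℕ} (h : FixAbove π B)
    {x : ℕ} (hx : x ≤ B) : π x ≤ B := by
  by_contra hmem
  push_neg at hmem
  have := h _ hmem
  have := π.injective this
  omega

lemma exists_descent {π : Equiv.Perm ℕ} (h : π ≠ 1) : ∃ i, π (i+1) < π i := by
  by_contra hno
  push_neg at hno
  have hsm : StrictMono π := strictMono_nat_of_lt_succ fun i =>
    lt_of_le_of_ne (hno i) (fun he => by have := π.injective he; omega)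
  have h1 : ∀ x, x ≤ π x := fun x => hsm.le_apply
  have hsm' : StrictMono ⇑π⁻¹ := by
    intro a b hab
    rcases lt_trichotomy (π⁻¹ a) (π⁻¹ b) with hlt | heq | hgt
    · exact hlt
    · exact absurd (π⁻¹.injective heq) (by omega)
    · have := hsm hgt
      simp only [Equiv.Perm.coe_inv, Equiv.apply_symm_apply] at this
      omega
  have h2 : ∀ x, x ≤ π⁻¹ x := fun x => hsm'.le_apply
  apply h
  ext x
  have := h2 (π x)
  simp only [Equiv.Perm.coe_inv, Equiv.symm_apply_apply] at this
  have := h1 x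
  simp only [Equiv.Perm.one_apply]
  omega

lemma descent_le {π : Equiv.Perm ℕ} {B i : ℕ} (hfix : FixAbove π B)
    (h : π (i+1) < π i) : i + 1 ≤ B := by
  by_contra hgt
  push_neg at hgt
  rcases Nat.lt_or_ge B i with hi | hi
  · rw [hfix i hi, hfix (i+1) (by omega)] at h; omega
  · have hiB : i = B := by omega
    subst hiB
    rw [hfix (i+1) (by omega)] at h
    have := hfix.mapsTo (le_refl i)
    omega

lemma exists_word_of_card (B : ℕ) : ∀ N (π : Equiv.Perm ℕ), FixAbove π B →
    (invSet π B).card = N → ∃ v : List ℕ, wordPerm v = π ∧ v.length = N := by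
  intro N
  induction N with
  | zero =>
    intro π hfix hcard
    refine ⟨[], ?_, rfl⟩
    rw [wordPerm_nil]
    by_contra hne
    obtain ⟨i, hi⟩ := exists_descent (Ne.symm hne)
    have hiB := descent_le hfix hi
    have : (i, i+1) ∈ invSet π B := mem_invSet.2 ⟨by omega, hiB, by omega, hi⟩
    rw [Finset.card_eq_zero] at hcard
    simp [hcard] at this
  | succ N ih =>
    intro π hfix hcard
    have hne : π ≠ 1 := by
      rintro rfl
      rw [invSet_one] at hcard
      simp at hcard
    obtain ⟨i, hi⟩ := exists_descent hne
    have hiB := descent_le hfix hi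
    have hfix' : FixAbove (π * sgen i) B := by
      intro x hx
      simp only [Equiv.Perm.mul_apply, sgen_apply]
      rw [if_neg (by omega), if_neg (by omega)]
      exact hfix x hx
    have hcard' : (invSet (π * sgen i) B).card = N := by
      have := card_invSet_mul_descent π i B hiB hi
      omega
    obtain ⟨v, hv, hlen⟩ := ih (π * sgen i) hfix' hcard'
    refine ⟨v ++ [i], ?_, by simp [hlen]⟩
    rw [wordPerm_append_singleton, hv, mul_assoc, sgen_mul_self, mul_one]

def listBound (w : List ℕ) : ℕ := w.foldr (fun a b => max (a+1) b) 0

lemma le_listBound {w : List ℕ} {l : ℕ} (h : l ∈ w) : l + 1 ≤ listBound w := by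
  induction w with
  | nil => simp at h
  | cons a w ih =>
    rcases List.mem_cons.1 h with rfl | h
    · simp [listBound]
    · have := ih h
      simp only [listBound, List.foldr_cons] at *
      omega

lemma wordPerm_fixAbove {w : List ℕ} {B : ℕ} (hB : ∀ l ∈ w, l + 1 ≤ B) :
    FixAbove (wordPerm w) B := by
  induction w with
  | nil => intro x hx; simp [wordPerm_nil]
  | cons a w ih =>
    intro x hx
    rw [wordPerm_cons, Equiv.Perm.mul_apply,
      ih (fun l hl => hB l (List.mem_cons_of_mem a hl)) x hx, sgen_apply]
    have := hB a (List.mem_cons_self)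
    rw [if_neg (by omega), if_neg (by omega)]

lemma getD_mem {w : List ℕ} {t : ℕ} (ht : t < w.length) : w.getD t 0 ∈ w := by
  rw [List.getD_eq_getElem w 0 ht]
  exact List.getElem_mem ht

lemma reduced_ascent {w : List ℕ} (hred : IsReducedWord w) {t : ℕ} (ht : t < w.length) :
    (crossing w t).1 < (crossing w t).2 := by
  classical
  set B := listBound w with hBdef
  have hB : ∀ l ∈ w, l + 1 ≤ B := fun l hl => le_listBound hl
  have key : ∀ s, s ≤ w.length →
      (invSet (wordPerm (w.take s)) B).card
        + 2 * ((Finset.range s).filter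
            (fun r => ¬ ((crossing w r).1 < (crossing w r).2))).card ≤ s := by
    intro s
    induction s with
    | zero => simp [wordPerm_nil, invSet_one]
    | succ s ih =>
      intro hs
      have hsl : s < w.length := by omega
      have ihs := ih (by omega)
      have hiB : w.getD s 0 + 1 ≤ B := hB _ (getD_mem hsl)
      have hstep := wordPerm_take_succ w s hsl
      have hrange : (Finset.range (s+1)).filter
            (fun r => ¬ ((crossing w r).1 < (crossing w r).2))
          = if ¬ ((crossing w s).1 < (crossing w s).2) then
              insert s ((Finset.range s).filter
                (fun r => ¬ ((crossing w r).1 < (crossing w r).2)))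
            else (Finset.range s).filter
                (fun r => ¬ ((crossing w r).1 < (crossing w r).2)) := by
        rw [Finset.range_add_one, Finset.filter_insert]
      by_cases hasc : (crossing w s).1 < (crossing w s).2
      · have hasc2 : wordPerm (w.take s) (w.getD s 0)
            < wordPerm (w.take s) (w.getD s 0 + 1) := by
          simpa [crossing] using hasc
        have hcard := card_invSet_mul_ascent (wordPerm (w.take s)) (w.getD s 0) B hiB hasc2
        rw [hstep, hcard, hrange, if_neg (not_not_intro hasc)]
        omega
      · have hdesc2 : wordPerm (w.take s) (w.getD s 0 + 1)
            < wordPerm (w.take s) (w.getD s 0) := by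
          simp only [crossing, not_lt] at hasc
          rcases lt_or_eq_of_le hasc with h | h
          · exact h
          · exact absurd ((wordPerm (w.take s)).injective h) (by omega)
        have hcard := card_invSet_mul_descent (wordPerm (w.take s)) (w.getD s 0) B hiB hdesc2
        rw [hstep, hrange, if_pos hasc, Finset.card_insert_of_notMem (by simp)]
        omega
  have hle : w.length ≤ (invSet (wordPerm w) B).card := by
    obtain ⟨v, hv, hvlen⟩ := exists_word_of_card B ((invSet (wordPerm w) B).card)
      (wordPerm w) (wordPerm_fixAbove hB) rfl
    rw [← hvlen]; exact hred v hv
  have hkey := key w.length (le_refl _)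
  rw [List.take_length] at hkey
  have hD0 : ((Finset.range w.length).filter
      (fun r => ¬ ((crossing w r).1 < (crossing w r).2))).card = 0 := by omega
  rw [Finset.card_eq_zero] at hD0
  by_contra hno
  have hmem : t ∈ (Finset.range w.length).filter
      (fun r => ¬ ((crossing w r).1 < (crossing w r).2)) :=
    Finset.mem_filter.2 ⟨Finset.mem_range.2 ht, hno⟩
  rw [hD0] at hmem
  simp at hmem

lemma sameCross_comm {c : ℕ × ℕ} {u v : ℕ} :
    SameCross c (u, v) ↔ SameCross c (v, u) := by
  unfold SameCross; exact or_comm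

def posn (w : List ℕ) (t v : ℕ) : ℕ := (wordPerm (w.take t))⁻¹ v

lemma posn_succ {w : List ℕ} {t : ℕ} (ht : t < w.length) (v : ℕ) :
    posn w (t+1) v = sgen (w.getD t 0) (posn w t v) := by
  unfold posn
  rw [wordPerm_take_succ w t ht, mul_inv_rev, Equiv.Perm.mul_apply,
    show (sgen (w.getD t 0))⁻¹ = sgen (w.getD t 0) from by simp [sgen]]

lemma posn_zero (w : List ℕ) (v : ℕ) : posn w 0 v = v := by
  simp [posn, wordPerm_nil]

lemma posn_length {w : List ℕ} {σ : Equiv.Perm ℕ} (hw : wordPerm w = σ) (v : ℕ) :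
    posn w w.length v = σ⁻¹ v := by
  simp [posn, List.take_length, hw]

lemma posn_apply (w : List ℕ) (t x : ℕ) :
    posn w t (wordPerm (w.take t) x) = x := Equiv.symm_apply_apply _ _

lemma posn_inj {w : List ℕ} {t u v : ℕ} (h : posn w t u = posn w t v) : u = v :=
  (wordPerm (w.take t))⁻¹.injective h

/-- At a crossed step in an ascending diagram, the smaller value sits at `wₜ`. -/
lemma crossed_pos {w : List ℕ} (hasc : ∀ s < w.length, (crossing w s).1 < (crossing w s).2)
    {t u v : ℕ} (ht : t < w.length) (huv : u < v)
    (hx : SameCross (crossing w t) (u, v)) :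
    posn w t u = w.getD t 0 ∧ posn w t v = w.getD t 0 + 1 := by
  have h1 := hasc t ht
  rcases hx with h | h
  · have hu : wordPerm (w.take t) (w.getD t 0) = u := congrArg Prod.fst h
    have hv : wordPerm (w.take t) (w.getD t 0 + 1) = v := congrArg Prod.snd h
    constructor
    · rw [← hu]; exact posn_apply w t _
    · rw [← hv]; exact posn_apply w t _
  · have hu : wordPerm (w.take t) (w.getD t 0) = v := congrArg Prod.fst h
    have hv : wordPerm (w.take t) (w.getD t 0 + 1) = u := congrArg Prod.snd h
    exfalso
    rw [crossing] at h1
    simp only at h1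
    rw [hu, hv] at h1
    omega

lemma not_crossed_order {w : List ℕ} {t u v : ℕ} (ht : t < w.length) (huv : u ≠ v)
    (hx : ¬ SameCross (crossing w t) (u, v)) :
    (posn w (t+1) u < posn w (t+1) v ↔ posn w t u < posn w t v) := by
  rw [posn_succ ht, posn_succ ht]
  have hne : posn w t u ≠ posn w t v := fun h => huv (posn_inj h)
  have h1 : ¬(posn w t u = w.getD t 0 ∧ posn w t v = w.getD t 0 + 1) := by
    rintro ⟨ha, hb⟩
    apply hx
    left
    rw [crossing, Prod.mk.injEq]
    constructor
    · rw [← ha, posn]; exact Equiv.apply_symm_apply (wordPerm (w.take t)) u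
    · rw [← hb, posn]; exact Equiv.apply_symm_apply (wordPerm (w.take t)) v
  have h2 : ¬(posn w t v = w.getD t 0 ∧ posn w t u = w.getD t 0 + 1) := by
    rintro ⟨ha, hb⟩
    apply hx
    right
    rw [crossing, Prod.mk.injEq]
    constructor
    · rw [← ha, posn]; exact Equiv.apply_symm_apply (wordPerm (w.take t)) v
    · rw [← hb, posn]; exact Equiv.apply_symm_apply (wordPerm (w.take t)) u
  generalize posn w t u = a at *
  generalize posn w t v = b at *
  rw [sgen_apply, sgen_apply]
  split_ifs <;> omega

lemma crossed_next {w : List ℕ} (hasc : ∀ s < w.length, (crossing w s).1 < (crossing w s).2)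
    {t u v : ℕ} (ht : t < w.length) (huv : u < v)
    (hx : SameCross (crossing w t) (u, v)) :
    posn w (t+1) v < posn w (t+1) u := by
  obtain ⟨ha, hb⟩ := crossed_pos hasc ht huv hx
  rw [posn_succ ht, posn_succ ht, ha, hb, sgen_left, sgen_right]
  omega

lemma order_step_back {w : List ℕ}
    (hasc : ∀ s < w.length, (crossing w s).1 < (crossing w s).2)
    {t u v : ℕ} (ht : t < w.length) (huv : u < v)
    (h : posn w (t+1) u < posn w (t+1) v) : posn w t u < posn w t v := by
  by_cases hx : SameCross (crossing w t) (u, v)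
  · obtain ⟨ha, hb⟩ := crossed_pos hasc ht huv hx
    rw [ha, hb]; omega
  · exact (not_crossed_order ht huv.ne hx).1 h

lemma order_mono {w : List ℕ}
    (hasc : ∀ s < w.length, (crossing w s).1 < (crossing w s).2)
    {u v : ℕ} (huv : u < v) {t1 t2 : ℕ} (h12 : t1 ≤ t2) (h2 : t2 ≤ w.length)
    (h : posn w t2 u < posn w t2 v) : posn w t1 u < posn w t1 v := by
  induction t2, h12 using Nat.le_induction with
  | base => exact h
  | succ s hs ih => exact ih (by omega) (order_step_back hasc (by omega) huv h)

lemma exists_flip {w : List ℕ}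
    (hasc : ∀ s < w.length, (crossing w s).1 < (crossing w s).2)
    {u v : ℕ} (huv : u < v) {a : ℕ} (ha : a ≤ w.length)
    (hOa : posn w a u < posn w a v)
    (hOm : ¬ posn w w.length u < posn w w.length v) :
    ∃ t', a ≤ t' ∧ t' < w.length ∧ SameCross (crossing w t') (u, v) := by
  by_contra hcon
  push_neg at hcon
  have hall : ∀ s, a ≤ s → s ≤ w.length → posn w s u < posn w s v := by
    intro s hs
    induction s, hs using Nat.le_induction with
    | base => intro _; exact hOa
    | succ s hs ih =>
      intro hsl
      have hO := ih (by omega)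
      have hx : ¬ SameCross (crossing w s) (u, v) := hcon s hs (by omega)
      exact (not_crossed_order (show s < w.length by omega) huv.ne hx).2 hO
  exact hOm (hall w.length ha le_rfl)


/-- Let `σ = a₁…a_k b₁…b_{n−k}` be Grassmannian with unique descent at position `k`.
If in a reduced decomposition of `σ` the value `a_i = σ p` (`p ≤ k`) is exchanged with
`b_j = σ q` (`k < q`) at step `t`, then for every `q'` with `k < q' < q` there is a later
step at which `a_i` is exchanged with `b_{j'} = σ q'`. -/
theorem grassmannian_later_swaps (n k : ℕ) (σ : Equiv.Perm ℕ)
    (hk : 1 ≤ k ∧ k < n)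
    (hσ : ∀ i : ℕ, i = 0 ∨ n < i → σ i = i)
    (hdesc : ∀ i : ℕ, 1 ≤ i → (σ (i + 1) < σ i ↔ i = k))
    (w : List ℕ) (hw : IsReducedWordOf σ w)
    (t p q : ℕ) (ht : t < w.length)
    (hp : 1 ≤ p ∧ p ≤ k) (hq : k < q ∧ q ≤ n)
    (hx : SameCross (crossing w t) (σ p, σ q)) :
    ∀ q' : ℕ, k < q' → q' < q →
      ∃ t' : ℕ, t < t' ∧ t' < w.length ∧ SameCross (crossing w t') (σ p, σ q') := by
  obtain ⟨hwσ, hred⟩ := hw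
  have hasc : ∀ s < w.length, (crossing w s).1 < (crossing w s).2 :=
    fun s hs => reduced_ascent hred hs
  intro q' hkq' hq'q
  have hinc : ∀ i, k < i → σ i < σ (i+1) := by
    intro i hi
    have h := hdesc i (by omega)
    have hne : σ i ≠ σ (i+1) := fun he => by have := σ.injective he; omega
    have h2 : ¬ (σ (i+1) < σ i) := by rw [h]; omega
    omega
  have hmono : ∀ a b, k < a → a < b → σ a < σ b := by
    intro a b hka hab
    induction b, hab using Nat.le_induction with
    | base => exact hinc a hka
    | succ b hb ih => exact (ih).trans (hinc b (by omega))
  have hσqq' : σ q' < σ q := hmono q' q hkq' hq'q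
  have hqp : σ q < σ p := by
    rcases lt_trichotomy (σ p) (σ q) with h | h | h
    · exfalso
      have hOm : posn w w.length (σ p) < posn w w.length (σ q) := by
        rw [posn_length hwσ, posn_length hwσ]
        simp only [Equiv.Perm.coe_inv, Equiv.symm_apply_apply]
        omega
      have hnext := crossed_next hasc ht h hx
      have := order_mono hasc h (show t+1 ≤ w.length by omega) le_rfl hOm
      omega
    · exact absurd (σ.injective h) (by omega)
    · exact h
  have hx' : SameCross (crossing w t) (σ q, σ p) := sameCross_comm.1 hx
  obtain ⟨hpos_q, hpos_p⟩ := crossed_pos hasc ht hqp hx'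
  have hOt2 : posn w t (σ q') < posn w t (σ q) := by
    apply order_mono hasc hσqq' (le_of_lt ht) le_rfl
    rw [posn_length hwσ, posn_length hwσ]
    simp only [Equiv.Perm.coe_inv, Equiv.symm_apply_apply]
    omega
  have hσq'p : σ q' < σ p := hσqq'.trans hqp
  have hOt : posn w t (σ q') < posn w t (σ p) := by
    rw [hpos_p]
    rw [hpos_q] at hOt2
    omega
  have hnc : ¬ SameCross (crossing w t) (σ q', σ p) := by
    intro hcx
    have hc : crossing w t = (σ q, σ p) := by
      rw [crossing, Prod.mk.injEq]
      constructor
      · rw [← hpos_q]; exact Equiv.apply_symm_apply (wordPerm (w.take t)) (σ q)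
      · rw [← hpos_p]; exact Equiv.apply_symm_apply (wordPerm (w.take t)) (σ p)
    rw [hc] at hcx
    rcases hcx with h | h <;> rw [Prod.mk.injEq] at h
    · have := σ.injective h.1; omega
    · have := σ.injective h.1; omega
  have hOt1 : posn w (t+1) (σ q') < posn w (t+1) (σ p) :=
    (not_crossed_order ht (fun he => by have := σ.injective he; omega) hnc).2 hOt
  have hOm : ¬ posn w w.length (σ q') < posn w w.length (σ p) := by
    rw [posn_length hwσ, posn_length hwσ]
    simp only [Equiv.Perm.coe_inv, Equiv.symm_apply_apply]
    omega
  obtain ⟨t', ht'1, ht'2, ht'x⟩ := exists_flip hasc hσq'p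
    (show t+1 ≤ w.length by omega) hOt1 hOm
  exact ⟨t', by omega, ht'2, sameCross_comm.1 ht'x⟩
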